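/- Let ξ ∈ R^d be an ℓ2-unit vector, M, n ∈ N, and let U_1,…,U_K be all vectors with integer components and |U_k|_∞ = M. If nonnegative integers p(1),…,p(K) satisfy |Σ_{k=1}^K p(k)U_k − nξ|_∞ ≤ M, then Σ_{k=1}^K p(k)·E[T(0,U_k)] ≥ E[a_{0,n}(ξ)] − d·(M+1)·m_{ν,1}. -/

import Mathlib

open MeasureTheory ProbabilityTheory Filter Real Set

namespace FPP

/-- Vertices of the `d`-dimensional cubic lattice. -/
abbrev V (d : ℕ) := Fin d → ℤ

/-- A configuration of edge weights (indexed by unordered pairs of vertices). -/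
abbrev Cfg (d : ℕ) := Sym2 (V d) → ℝ

/-- Nearest-neighbour adjacency on `ℤ^d`. -/
def adj {d : ℕ} (x y : V d) : Prop := ∑ i, |x i - y i| = 1

/-- `*`-adjacency: distinct points at `ℓ∞`-distance one. -/
def adjStar {d : ℕ} (x y : V d) : Prop := x ≠ y ∧ ∀ i, |x i - y i| ≤ 1

/-- `e` is an edge of the lattice `ℤ^d`. -/
def IsEdge {d : ℕ} (e : Sym2 (V d)) : Prop := ∃ x y, adj x y ∧ e = s(x, y)

/-- The passage time of a path (a list of vertices). -/
def pathCost {d : ℕ} (w : Cfg d) : List (V d) → ℝ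
  | [] => 0
  | [_] => 0
  | x :: y :: rest => w s(x, y) + pathCost w (y :: rest)

/-- `γ` starts in `A` and ends in `B`. -/
def connects {d : ℕ} (γ : List (V d)) (A B : Set (V d)) : Prop :=
  (∃ a ∈ A, γ.head? = some a) ∧ (∃ b ∈ B, γ.getLast? = some b)

/-- First passage time between two sets of vertices. -/
noncomputable def fpt {d : ℕ} (w : Cfg d) (A B : Set (V d)) : ℝ :=
  sInf {t | ∃ γ : List (V d), γ.Chain' adj ∧ connects γ A B ∧ pathCost w γ = t}

/-- Point-to-point first passage time. -/
noncomputable def pt {d : ℕ} (w : Cfg d) (x y : V d) : ℝ := fpt w {x} {y}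

/-- A lattice point `[x]` within `ℓ∞`-distance `1/2` of `x ∈ ℝ^d`. -/
noncomputable def rd {d : ℕ} (x : Fin d → ℝ) : V d := fun i => round (x i)

/-- `a_{0,n}(ξ) = T(0, nξ)`. -/
noncomputable def aT {d : ℕ} (w : Cfg d) (n : ℕ) (ξ : Fin d → ℝ) : ℝ :=
  pt w 0 (rd ((n : ℝ) • ξ))

/-- `ξ` is an `ℓ2`-unit vector. -/
def unitVec {d : ℕ} (ξ : Fin d → ℝ) : Prop := ∑ i, ξ i ^ 2 = 1

/-- The open cluster of `x` in a bond configuration `η`. -/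
def openCluster {d : ℕ} (η : Sym2 (V d) → Bool) (x : V d) : Set (V d) :=
  {y | ∃ γ : List (V d), γ.Chain' (fun a b => adj a b ∧ η s(a, b) = true) ∧
        γ.head? = some x ∧ γ.getLast? = some y}

/-- `Q` is an i.i.d. Bernoulli(`p`) bond percolation measure on `ℤ^d`. -/
def BernoulliIID (d : ℕ) (Q : Measure (Sym2 (V d) → Bool)) (p : ℝ) : Prop :=
  IsProbabilityMeasure Q ∧
  (∀ e : Sym2 (V d), IsEdge e → (Q {η | η e = true}).toReal = p) ∧
  iIndepFun (fun (e : {e : Sym2 (V d) // IsEdge e}) η => η e.1) Q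

/-- The critical probability of i.i.d. bond percolation on `ℤ^d`. -/
noncomputable def pc (d : ℕ) : ℝ :=
  sSup {p : ℝ | p ∈ Icc (0 : ℝ) 1 ∧
    ∀ Q : Measure (Sym2 (V d) → Bool), BernoulliIID d Q p →
      Q {η | (openCluster η 0).Infinite} = 0}

/-- `P` makes the edge weights i.i.d. with common law `ν`. -/
def IID (d : ℕ) (P : Measure (Cfg d)) (ν : Measure ℝ) : Prop :=
  IsProbabilityMeasure P ∧
  (∀ e : Sym2 (V d), IsEdge e → P.map (fun w => w e) = ν) ∧
  iIndepFun (fun (e : {e : Sym2 (V d) // IsEdge e}) w => w e.1) P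

/-- The site `x` is unhealthy: some adjacent edge has weight `> κ⁻¹`. -/
def unhealthy {d : ℕ} (κ : ℝ) (w : Cfg d) (x : V d) : Prop :=
  ∃ y, adj x y ∧ κ⁻¹ < w s(x, y)

/-- The bad nearest-neighbour cluster `C₋(x)`: sites joined to `x` by paths all of
whose edges are bad (weight `< κ`). -/
def badCluster {d : ℕ} (κ : ℝ) (w : Cfg d) (x : V d) : Set (V d) :=
  {y | ∃ γ : List (V d), γ.Chain' (fun a b => adj a b ∧ w s(a, b) < κ) ∧
        γ.head? = some x ∧ γ.getLast? = some y}

/-- The unhealthy `*`-connected cluster `C₊(x)`. -/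
def unhealthyCluster {d : ℕ} (κ : ℝ) (w : Cfg d) (x : V d) : Set (V d) :=
  {y | ∃ γ : List (V d), γ.Chain' adjStar ∧ (∀ v ∈ γ, unhealthy κ w v) ∧
        γ.head? = some x ∧ γ.getLast? = some y}

/-- `s` has fewer than `r` vertices. -/
def smallSet {d : ℕ} (s : Set (V d)) (r : ℝ) : Prop := s.Finite ∧ (s.ncard : ℝ) < r

open Classical in
/-- The truncated weights `σ` (with cutoff `κ` and cluster-size threshold `r`). -/
noncomputable def tw {d : ℕ} (κ r : ℝ) (w : Cfg d) : Cfg d := fun e =>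
  if (κ ≤ w e ∧ w e ≤ κ⁻¹)
      ∨ (w e < κ ∧ ∃ x ∈ e, smallSet (badCluster κ w x) r)
      ∨ (κ⁻¹ < w e ∧ ∃ x ∈ e, smallSet (unhealthyCluster κ w x) r)
    then w e else 1

/-- The box `D_n(c) = c + [-3^d κ⁻¹ n^δ, 3^d κ⁻¹ n^δ]^d` (as a set of lattice points). -/
def Dbox {d : ℕ} (κ δ : ℝ) (n : ℕ) (c : Fin d → ℝ) : Set (V d) :=
  {v | ∀ i, |(v i : ℝ) - c i| ≤ 3 ^ d * κ⁻¹ * (n : ℝ) ^ δ}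

/-- `|U|_∞ = M`. -/
def linfEqM {d : ℕ} (U : V d) (M : ℕ) : Prop :=
  (∀ i, |U i| ≤ (M : ℤ)) ∧ ∃ i, |U i| = (M : ℤ)

/-- Kesten's quantity `Λ(M, n)`. -/
noncomputable def Lam {d : ℕ} (P : Measure (Cfg d)) (ξ : Fin d → ℝ) (μ : ℝ) (M n : ℕ) : ℝ :=
  sInf {t | ∃ p : V d → ℕ, (Function.support p).Finite ∧
        (∀ U, p U ≠ 0 → linfEqM U M) ∧
        (∀ i, |((∑ᶠ U, p U • U) i : ℝ) - (n : ℝ) * ξ i| ≤ (M : ℝ)) ∧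
        t = ∑ᶠ U, (p U : ℝ) * ∫ w, pt w 0 U ∂P} - (n : ℝ) * μ

section Statement11Aux

variable {d : ℕ}

lemma isEdge_of_adj {x y : V d} (h : adj x y) : IsEdge s(x, y) := ⟨x, y, h, rfl⟩

lemma pathCost_cons_cons (w : Cfg d) (x y : V d) (l : List (V d)) :
    pathCost w (x :: y :: l) = w s(x, y) + pathCost w (y :: l) := rfl

lemma pathCost_nonneg {w : Cfg d} (hw : ∀ e, IsEdge e → 0 ≤ w e) :
    ∀ {γ : List (V d)}, γ.Chain' adj → 0 ≤ pathCost w γ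
  | [], _ => le_refl 0
  | [_], _ => le_refl 0
  | x :: y :: l, h => by
      rw [List.Chain', List.isChain_cons_cons] at h
      have := pathCost_nonneg hw (γ := y :: l) h.2
      have h0 : 0 ≤ w s(x, y) := hw _ (isEdge_of_adj h.1)
      rw [pathCost_cons_cons]; linarith

lemma pathCost_congr {w w' : Cfg d} (hw : ∀ e, IsEdge e → w e = w' e) :
    ∀ {γ : List (V d)}, γ.Chain' adj → pathCost w γ = pathCost w' γ
  | [], _ => rfl
  | [_], _ => rfl
  | x :: y :: l, h => by
      rw [List.Chain', List.isChain_cons_cons] at h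
      rw [pathCost_cons_cons, pathCost_cons_cons, hw _ (isEdge_of_adj h.1),
        pathCost_congr hw (γ := y :: l) h.2]

lemma pathCost_append_cons (w : Cfg d) (a : V d) :
    ∀ (l1 l2 : List (V d)),
      pathCost w (l1 ++ a :: l2) = pathCost w (l1 ++ [a]) + pathCost w (a :: l2)
  | [], l2 => by
      cases l2 with
      | nil => simp [pathCost]
      | cons b l => simp [pathCost]
  | [x], l2 => by
      simp [pathCost_cons_cons, pathCost]
  | x :: y :: l1, l2 => by
      have := pathCost_append_cons w a (y :: l1) l2
      simp only [List.cons_append, pathCost_cons_cons] at *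
      rw [this]; ring

/-- The set of admissible paths from `x` to `y`. -/
def Paths (x y : V d) : Set (List (V d)) :=
  {γ | γ.Chain' adj ∧ γ.head? = some x ∧ γ.getLast? = some y}

lemma connects_singleton {γ : List (V d)} {x y : V d} :
    connects γ {x} {y} ↔ γ.head? = some x ∧ γ.getLast? = some y := by
  simp [connects]

lemma exists_chain_aux : ∀ (n : ℕ) (x y : V d), (∑ i, (x i - y i).natAbs) = n →
    ∃ γ : List (V d), γ.Chain' adj ∧ γ.head? = some x ∧ γ.getLast? = some y ∧
      γ.length = n + 1 := by
  intro n
  induction n using Nat.strong_induction_on with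
  | _ n ih =>
    intro x y hn
    match n, hn with
    | 0, hn =>
      have hxy : x = y := by
        funext i
        have h0 : (x i - y i).natAbs = 0 := by
          by_contra h
          have : 0 < ∑ i, (x i - y i).natAbs :=
            Finset.sum_pos' (fun _ _ => Nat.zero_le _)
              ⟨i, Finset.mem_univ i, Nat.pos_of_ne_zero h⟩
          omega
        omega
      exact ⟨[x], List.isChain_singleton x, rfl, by simp [hxy], rfl⟩
    | (m + 1), hn =>
      have hne : ∃ i, x i ≠ y i := by
        by_contra h
        push_neg at h
        have : (∑ i, (x i - y i).natAbs) = 0 :=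
          Finset.sum_eq_zero fun i _ => by rw [h i]; omega
        omega
      obtain ⟨i, hi⟩ := hne
      set s : ℤ := if x i < y i then 1 else -1 with hs
      set x' : V d := Function.update x i (x i + s) with hx'
      have hx'i : x' i = x i + s := Function.update_self i _ x
      have hx'j : ∀ j, j ≠ i → x' j = x j := fun j hj => Function.update_of_ne hj _ x
      have habs : (x' i - y i).natAbs + 1 = (x i - y i).natAbs := by
        rw [hx'i, hs]
        split_ifs with h <;> omega
      have hsum : (∑ j, (x' j - y j).natAbs) = m := by
        have h1 : (x' i - y i).natAbs + ∑ j ∈ Finset.univ.erase i, (x' j - y j).natAbs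
            = ∑ j, (x' j - y j).natAbs :=
          Finset.add_sum_erase _ (fun j => (x' j - y j).natAbs) (Finset.mem_univ i)
        have h2 : (x i - y i).natAbs + ∑ j ∈ Finset.univ.erase i, (x j - y j).natAbs
            = ∑ j, (x j - y j).natAbs :=
          Finset.add_sum_erase _ (fun j => (x j - y j).natAbs) (Finset.mem_univ i)
        have h3 : ∑ j ∈ Finset.univ.erase i, (x' j - y j).natAbs
            = ∑ j ∈ Finset.univ.erase i, (x j - y j).natAbs := by
          refine Finset.sum_congr rfl fun j hj => ?_
          rw [hx'j j (Finset.ne_of_mem_erase hj)]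
        omega
      have hadj : adj x x' := by
        unfold adj
        rw [Finset.sum_eq_single_of_mem i (Finset.mem_univ i)]
        · rw [hx'i, hs]; split_ifs <;> simp
        · intro j _ hj
          rw [hx'j j hj, sub_self, abs_zero]
      obtain ⟨γ', hc, hh, hl, hlen⟩ := ih m (by omega) x' y hsum
      refine ⟨x :: γ', ?_, rfl, ?_, by simp [hlen]⟩
      · rw [List.Chain', List.isChain_cons]
        exact ⟨fun b hb => by rw [hh] at hb; cases hb; exact hadj, hc⟩
      · cases γ' with
        | nil => simp at hh
        | cons b t => rw [List.getLast?_cons_cons]; exact hl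

lemma exists_chain (x y : V d) :
    ∃ γ : List (V d), γ.Chain' adj ∧ γ.head? = some x ∧ γ.getLast? = some y ∧
      γ.length = (∑ i, (x i - y i).natAbs) + 1 :=
  exists_chain_aux _ x y rfl

lemma paths_nonempty (x y : V d) : (Paths x y).Nonempty := by
  obtain ⟨γ, h1, h2, h3, _⟩ := exists_chain x y
  exact ⟨γ, h1, h2, h3⟩

lemma paths_countable (x y : V d) : (Paths x y).Countable := Set.to_countable _

/-- Measurable surrogate for the point-to-point passage time. -/
noncomputable def ptm (w : Cfg d) (x y : V d) : ℝ :=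
  sInf ((fun γ => max 0 (pathCost w γ)) '' Paths x y)

lemma ptm_set_nonneg {w : Cfg d} {x y : V d} :
    ∀ t ∈ (fun γ => max 0 (pathCost w γ)) '' Paths x y, (0:ℝ) ≤ t := by
  rintro t ⟨γ, _, rfl⟩; exact le_max_left _ _

lemma ptm_bddBelow (w : Cfg d) (x y : V d) :
    BddBelow ((fun γ => max 0 (pathCost w γ)) '' Paths x y) :=
  ⟨0, fun t ht => ptm_set_nonneg t ht⟩

lemma ptm_nonneg (w : Cfg d) (x y : V d) : 0 ≤ ptm w x y :=
  le_csInf ((paths_nonempty x y).image _) ptm_set_nonneg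

lemma ptm_le {γ : List (V d)} {x y : V d} (hγ : γ ∈ Paths x y) (w : Cfg d) :
    ptm w x y ≤ max 0 (pathCost w γ) :=
  csInf_le (ptm_bddBelow w x y) (Set.mem_image_of_mem _ hγ)

lemma pt_eq_ptm {w : Cfg d} (hw : ∀ e, IsEdge e → 0 ≤ w e) (x y : V d) :
    pt w x y = ptm w x y := by
  unfold pt fpt ptm
  congr 1
  ext t
  constructor
  · rintro ⟨γ, hc, hcon, rfl⟩
    rw [connects_singleton] at hcon
    exact ⟨γ, ⟨hc, hcon.1, hcon.2⟩, (max_eq_right (pathCost_nonneg hw hc)).symm ▸ rfl⟩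
  · rintro ⟨γ, ⟨hc, h1, h2⟩, rfl⟩
    exact ⟨γ, hc, connects_singleton.mpr ⟨h1, h2⟩, (max_eq_right (pathCost_nonneg hw hc)).symm ▸ rfl⟩

lemma paths_concat {x y z : V d} {γ1 γ2 : List (V d)}
    (h1 : γ1 ∈ Paths x y) (h2 : γ2 ∈ Paths y z) :
    ∃ γ ∈ Paths x z, ∀ w : Cfg d, pathCost w γ = pathCost w γ1 + pathCost w γ2 := by
  obtain ⟨hc1, hh1, hl1⟩ := h1
  obtain ⟨hc2, hh2, hl2⟩ := h2
  obtain ⟨t2, rfl⟩ : ∃ t2, γ2 = y :: t2 := by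
    cases γ2 with
    | nil => simp at hh2
    | cons a t =>
        have : a = y := by simpa using hh2
        exact ⟨t, by rw [this]⟩
  have hne1 : γ1 ≠ [] := by rintro rfl; simp at hh1
  have hlast1 : γ1.getLast hne1 = y := by
    have := List.getLast?_eq_getLast hne1
    rw [hl1] at this; exact (Option.some.inj this).symm
  have hrepr : γ1.dropLast ++ [y] = γ1 := by
    rw [← hlast1]; exact List.dropLast_append_getLast hne1
  have hchain2 := List.isChain_cons.mp hc2
  refine ⟨γ1 ++ t2, ⟨?_, ?_, ?_⟩, ?_⟩
  · exact List.IsChain.append hc1 hchain2.2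
      (fun a ha b hb => by rw [hl1] at ha; cases ha; exact hchain2.1 b hb)
  · cases γ1 with
    | nil => exact absurd rfl hne1
    | cons a t => simpa using hh1
  · cases t2 with
    | nil => simpa using hl1.trans (by simpa using hl2)
    | cons b t =>
        rw [List.getLast?_append]
        simpa using hl2
  · intro w
    conv_lhs => rw [← hrepr]
    rw [List.append_assoc, List.singleton_append, pathCost_append_cons, hrepr]

lemma ptm_triangle (w : Cfg d) (x y z : V d) :
    ptm w x z ≤ ptm w x y + ptm w y z := by
  have key : ∀ a ∈ (fun γ => max 0 (pathCost w γ)) '' Paths x y,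
      ∀ b ∈ (fun γ => max 0 (pathCost w γ)) '' Paths y z, ptm w x z ≤ a + b := by
    rintro _ ⟨γ1, hγ1, rfl⟩ _ ⟨γ2, hγ2, rfl⟩
    obtain ⟨γ, hγ, hcost⟩ := paths_concat hγ1 hγ2
    refine (ptm_le hγ w).trans ?_
    rw [hcost w]
    refine max_le (by positivity) ?_
    exact add_le_add (le_max_right _ _) (le_max_right _ _)
  refine sub_le_iff_le_add.mp (le_csInf ((paths_nonempty x y).image _) fun a ha => ?_)
  rw [sub_le_comm]
  exact le_csInf ((paths_nonempty y z).image _) fun b hb => sub_le_iff_le_add'.mpr (key a ha b hb)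


/-! ### Translations -/

/-- Translation of an unordered pair. -/
def trE (v : V d) (e : Sym2 (V d)) : Sym2 (V d) := Sym2.map (· + v) e

/-- Translation acting on configurations. -/
def shiftC (v : V d) (w : Cfg d) : Cfg d := fun e => w (trE v e)

lemma shiftC_pair (v : V d) (w : Cfg d) (a b : V d) :
    shiftC v w s(a, b) = w s(a + v, b + v) := rfl

lemma adj_add {x y : V d} (v : V d) (h : adj x y) : adj (x + v) (y + v) := by
  unfold adj at *
  simpa using h

lemma pathCost_shiftC (v : V d) (w : Cfg d) :
    ∀ γ : List (V d), pathCost (shiftC v w) γ = pathCost w (γ.map (· + v))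
  | [] => rfl
  | [_] => rfl
  | x :: y :: l => by
      rw [pathCost_cons_cons, List.map_cons, List.map_cons, pathCost_cons_cons]
      rw [show ((y + v) :: List.map (· + v) l) = List.map (· + v) (y :: l) from rfl,
        ← pathCost_shiftC v w (y :: l), shiftC_pair]

lemma paths_map_mem {x y : V d} (v : V d) {γ : List (V d)} (h : γ ∈ Paths x y) :
    γ.map (· + v) ∈ Paths (x + v) (y + v) := by
  obtain ⟨hc, hh, hl⟩ := h
  refine ⟨List.isChain_map_of_isChain _ (fun a b hab => adj_add v hab) hc, ?_, ?_⟩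
  · rw [List.head?_map, hh]; rfl
  · rw [List.getLast?_map, hl]; rfl

lemma paths_map_image (v x y : V d) :
    (fun γ : List (V d) => γ.map (· + v)) '' Paths x y = Paths (x + v) (y + v) := by
  apply Set.Subset.antisymm
  · rintro _ ⟨γ, hγ, rfl⟩
    exact paths_map_mem v hγ
  · intro γ hγ
    refine ⟨γ.map (· + (-v)), ?_, ?_⟩
    · have := paths_map_mem (-v) hγ
      simpa using this
    · simp only [List.map_map]
      have : ((· + v) ∘ (· + (-v))) = (id : V d → V d) := by
        funext a; simp
      rw [this, List.map_id]

lemma ptm_shiftC (v : V d) (w : Cfg d) (x y : V d) :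
    ptm (shiftC v w) x y = ptm w (x + v) (y + v) := by
  unfold ptm
  congr 1
  rw [← paths_map_image v x y, ← Set.image_comp]
  apply Set.image_congr
  intro γ _
  simp only [Function.comp_apply, pathCost_shiftC]

/-! ### Measurability -/

lemma measurable_pathCost : ∀ γ : List (V d), Measurable fun w : Cfg d => pathCost w γ
  | [] => measurable_const
  | [_] => measurable_const
  | x :: y :: l => by
      have h1 : Measurable fun w : Cfg d => w s(x, y) := measurable_pi_apply _
      have h2 := measurable_pathCost (y :: l)
      exact h1.add h2

lemma measurable_ptm (x y : V d) : Measurable fun w : Cfg d => ptm w x y := by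
  obtain ⟨f, hf⟩ := (paths_countable x y).exists_eq_range (paths_nonempty x y)
  have hset : ∀ w : Cfg d, (fun γ => max 0 (pathCost w γ)) '' Paths x y
      = Set.range fun n => max 0 (pathCost w (f n)) := by
    intro w
    rw [hf, ← Set.range_comp]; rfl
  have : (fun w : Cfg d => ptm w x y)
      = fun w => ⨅ n, max 0 (pathCost w (f n)) := by
    funext w
    rw [ptm, hset w, sInf_range]
  rw [this]
  exact Measurable.iInf fun n => measurable_const.max (measurable_pathCost (f n))

lemma ptm_congr_edges {w w' : Cfg d} (hw : ∀ e, IsEdge e → w e = w' e) (x y : V d) :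
    ptm w x y = ptm w' x y := by
  unfold ptm
  congr 1
  apply Set.image_congr
  intro γ hγ
  rw [pathCost_congr hw hγ.1]


/-! ### The edge space -/

abbrev Eg (d : ℕ) := {e : Sym2 (V d) // IsEdge e}

def restrictE : Cfg d → (Eg d → ℝ) := fun w e => w e.1

lemma measurable_restrictE : Measurable (restrictE (d := d)) :=
  measurable_pi_lambda _ fun e => measurable_pi_apply _

open Classical in
noncomputable def extE : (Eg d → ℝ) → Cfg d := fun u e => if h : IsEdge e then u ⟨e, h⟩ else 0

lemma measurable_extE : Measurable (extE (d := d)) := by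
  refine measurable_pi_lambda _ fun e => ?_
  unfold extE
  split_ifs with h
  · exact measurable_pi_apply _
  · exact measurable_const

lemma ptm_extE_restrictE (w : Cfg d) (x y : V d) :
    ptm (extE (restrictE w)) x y = ptm w x y := by
  refine ptm_congr_edges (fun e he => ?_) x y
  unfold extE restrictE
  rw [dif_pos he]

/-- `ptm` as a function on the edge space. -/
noncomputable def Fpt (x y : V d) : (Eg d → ℝ) → ℝ := fun u => ptm (extE u) x y

lemma measurable_Fpt (x y : V d) : Measurable (Fpt (d := d) x y) :=
  (measurable_ptm x y).comp measurable_extE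

lemma trE_isEdge (v : V d) : ∀ {e : Sym2 (V d)}, IsEdge e → IsEdge (trE v e) := by
  rintro e ⟨x, y, hadj, rfl⟩
  exact ⟨x + v, y + v, adj_add v hadj, by simp [trE]⟩

/-- Translation acting on edges. -/
def trEg (v : V d) : Eg d → Eg d := fun e => ⟨trE v e.1, trE_isEdge v e.2⟩

lemma trEg_injective (v : V d) : Function.Injective (trEg (d := d) v) := by
  intro a b h
  have h1 : trE v a.1 = trE v b.1 := congrArg Subtype.val h
  have h2 : Function.Injective (fun x : V d => x + v) := fun x y hxy => by
    simpa using congrArg (fun z => z + (-v)) hxy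
  exact Subtype.ext (Sym2.map.injective h2 h1)

/-- The finite-dimensional box formula for a family of edge variables. -/
def edgeBox (P : Measure (Cfg d)) (ν : Measure ℝ) (Y : Eg d → Cfg d → ℝ) : Prop :=
  ∀ (S : Finset (Eg d)) (sets : Eg d → Set ℝ), (∀ i ∈ S, MeasurableSet (sets i)) →
    P (⋂ i ∈ S, Y i ⁻¹' sets i) = ∏ i ∈ S, ν (sets i)

lemma edgeBox_eval {P : Measure (Cfg d)} {ν : Measure ℝ} (hP : IID d P ν) :
    edgeBox P ν (fun e w => w e.1) := by
  intro S sets hsets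
  rw [(iIndepFun_iff_measure_inter_preimage_eq_mul.mp hP.2.2) S hsets]
  refine Finset.prod_congr rfl fun i hi => ?_
  calc P ((fun w : Cfg d => w i.1) ⁻¹' sets i)
      = (P.map (fun w : Cfg d => w i.1)) (sets i) :=
        (Measure.map_apply (measurable_pi_apply (i.1 : Sym2 (V d))) (hsets i hi)).symm
    _ = ν (sets i) := by rw [hP.2.1 i.1 i.2]

lemma edgeBox_shift {P : Measure (Cfg d)} {ν : Measure ℝ} (hP : IID d P ν) (v : V d) :
    edgeBox P ν (fun e w => w (trEg v e).1) := by
  classical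
  intro S sets hsets
  set g := trEg (d := d) v with hg
  set sets' : Eg d → Set ℝ :=
    fun j => if h : ∃ i, g i = j then sets (Classical.choose h) else Set.univ with hsets'
  have hinv : ∀ i : Eg d, sets' (g i) = sets i := by
    intro i
    have hex : ∃ i', g i' = g i := ⟨i, rfl⟩
    rw [hsets']
    simp only [dif_pos hex]
    have : Classical.choose hex = i := trEg_injective v (Classical.choose_spec hex)
    rw [this]
  have h1 : (⋂ i ∈ S, (fun w : Cfg d => w (g i).1) ⁻¹' sets i)
      = ⋂ j ∈ S.image g, (fun w : Cfg d => w j.1) ⁻¹' sets' j := by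
    ext w
    rw [Set.mem_iInter₂, Set.mem_iInter₂]
    constructor
    · intro hw j hj
      obtain ⟨i, hi, rfl⟩ := Finset.mem_image.mp hj
      show w ∈ (fun w : Cfg d => w (g i).1) ⁻¹' sets' (g i)
      rw [hinv i]
      exact hw i hi
    · intro hw i hi
      have := hw (g i) (Finset.mem_image_of_mem g hi)
      rwa [hinv i] at this
  have h2 : ∀ j ∈ S.image g, MeasurableSet (sets' j) := by
    intro j hj
    obtain ⟨i, hi, rfl⟩ := Finset.mem_image.mp hj
    rw [hinv i]
    exact hsets i hi
  rw [h1, edgeBox_eval hP (S.image g) sets' h2,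
    Finset.prod_image (fun a _ b _ hab => trEg_injective v hab)]
  refine Finset.prod_congr rfl fun i _ => ?_
  rw [hinv i]

lemma finmap_eq_pi {P : Measure (Cfg d)} {ν : Measure ℝ}
    [IsProbabilityMeasure ν] {Y : Eg d → Cfg d → ℝ}
    (hYm : ∀ e, Measurable (Y e)) (hY : edgeBox P ν Y) (t : Finset (Eg d)) :
    P.map (fun w (i : t) => Y i.1 w) = Measure.pi (fun _ : t => ν) := by
  classical
  refine (Measure.pi_eq fun s hs => ?_).symm
  rw [Measure.map_apply (measurable_pi_lambda _ fun i => hYm i.1)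
    (MeasurableSet.univ_pi hs)]
  set sets : Eg d → Set ℝ := fun e => if h : e ∈ t then s ⟨e, h⟩ else Set.univ with hsetsdef
  have hpre : (fun w (i : t) => Y i.1 w) ⁻¹' Set.pi Set.univ s = ⋂ i ∈ t, Y i ⁻¹' sets i := by
    ext w
    simp only [Set.mem_preimage, Set.mem_pi, Set.mem_univ, forall_true_left,
      Set.mem_iInter, Set.mem_preimage]
    constructor
    · intro h i hi
      rw [hsetsdef]; simp only [dif_pos hi]
      exact h ⟨i, hi⟩
    · intro h i
      have := h i.1 i.2
      rw [hsetsdef] at this; simpa only [dif_pos i.2] using this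
  have hsm : ∀ i ∈ t, MeasurableSet (sets i) := by
    intro i hi
    rw [hsetsdef]; simp only [dif_pos hi]
    exact hs ⟨i, hi⟩
  rw [hpre, hY t sets hsm]
  have : ∀ i : t, ν (s i) = ν (sets i.1) := by
    intro i
    rw [hsetsdef]; simp only [dif_pos i.2]
  calc ∏ i ∈ t, ν (sets i) = ∏ i : t, ν (sets i.1) := (Finset.prod_coe_sort t _).symm
    _ = ∏ i : t, ν (s i) := by
        refine Finset.prod_congr rfl fun i _ => ?_
        rw [this i]

lemma map_eq_of_edgeBox {P : Measure (Cfg d)} {ν : Measure ℝ}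
    [IsProbabilityMeasure P] [IsProbabilityMeasure ν] {Y Z : Eg d → Cfg d → ℝ}
    (hYm : ∀ e, Measurable (Y e)) (hZm : ∀ e, Measurable (Z e))
    (hY : edgeBox P ν Y) (hZ : edgeBox P ν Z) :
    P.map (fun w (e : Eg d) => Y e w) = P.map (fun w e => Z e w) := by
  have hmY : Measurable fun w (e : Eg d) => Y e w := measurable_pi_lambda _ fun e => hYm e
  have hmZ : Measurable fun w (e : Eg d) => Z e w := measurable_pi_lambda _ fun e => hZm e
  haveI : IsProbabilityMeasure (P.map (fun w (e : Eg d) => Y e w)) :=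
    Measure.isProbabilityMeasure_map hmY.aemeasurable
  refine ext_of_generate_finite (measurableCylinders (fun _ : Eg d => ℝ))
    generateFrom_measurableCylinders.symm isPiSystem_measurableCylinders ?_ ?_
  · intro u hu
    obtain ⟨t, S, hS, rfl⟩ := (mem_measurableCylinders u).mp hu
    have hcylY : (fun w (e : Eg d) => Y e w) ⁻¹' cylinder t S
        = (fun w (i : t) => Y i.1 w) ⁻¹' S := rfl
    have hcylZ : (fun w (e : Eg d) => Z e w) ⁻¹' cylinder t S
        = (fun w (i : t) => Z i.1 w) ⁻¹' S := rfl
    rw [Measure.map_apply hmY hS.cylinder, Measure.map_apply hmZ hS.cylinder,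
      hcylY, hcylZ,
      ← Measure.map_apply (measurable_pi_lambda _ fun i : t => hYm i.1) hS,
      ← Measure.map_apply (measurable_pi_lambda _ fun i : t => hZm i.1) hS,
      finmap_eq_pi hYm hY t, finmap_eq_pi hZm hZ t]
  · rw [Measure.map_apply hmY MeasurableSet.univ, Measure.map_apply hmZ MeasurableSet.univ]
    simp


/-! ### Integral lemmas -/

section Integrals

variable {P : Measure (Cfg d)} {ν : Measure ℝ}

lemma measurable_shiftC (v : V d) : Measurable (shiftC (d := d) v) :=
  measurable_pi_lambda _ fun e => measurable_pi_apply (trE v e)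

lemma integral_ptm_eq_integral_Fpt (x y : V d) :
    ∫ w, ptm w x y ∂P = ∫ u, Fpt x y u ∂(P.map restrictE) := by
  rw [integral_map measurable_restrictE.aemeasurable
    (measurable_Fpt x y).aestronglyMeasurable]
  refine integral_congr_ae (Filter.Eventually.of_forall fun w => ?_)
  exact (ptm_extE_restrictE w x y).symm

lemma integral_ptm_translate [IsProbabilityMeasure ν] (hP : IID d P ν) (v x y : V d) :
    ∫ w, ptm w (x + v) (y + v) ∂P = ∫ w, ptm w x y ∂P := by
  haveI : IsProbabilityMeasure P := hP.1
  have h1 : ∫ w, ptm w (x + v) (y + v) ∂P = ∫ w, ptm (shiftC v w) x y ∂P := by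
    refine integral_congr_ae (Filter.Eventually.of_forall fun w => ?_)
    exact (ptm_shiftC v w x y).symm
  have h2 : ∫ w, ptm (shiftC v w) x y ∂P = ∫ u, ptm u x y ∂(P.map (shiftC v)) :=
    (integral_map (measurable_shiftC v).aemeasurable
      (measurable_ptm x y).aestronglyMeasurable).symm
  have h3 : ∫ u, ptm u x y ∂(P.map (shiftC v))
      = ∫ u, Fpt x y u ∂((P.map (shiftC v)).map restrictE) := by
    rw [integral_map measurable_restrictE.aemeasurable
      (measurable_Fpt x y).aestronglyMeasurable]
    refine integral_congr_ae (Filter.Eventually.of_forall fun w => ?_)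
    exact (ptm_extE_restrictE w x y).symm
  have h4 : (P.map (shiftC v)).map restrictE = P.map restrictE := by
    rw [Measure.map_map measurable_restrictE (measurable_shiftC v)]
    have h5 : (restrictE ∘ shiftC v : Cfg d → Eg d → ℝ)
        = fun w e => w (trEg v e).1 := rfl
    rw [h5]
    exact map_eq_of_edgeBox (fun e => measurable_pi_apply _)
      (fun e => measurable_pi_apply _) (edgeBox_shift hP v) (edgeBox_eval hP)
  rw [h1, h2, h3, h4, ← integral_ptm_eq_integral_Fpt]

lemma integrable_eval (hP : IID d P ν) (hm1 : Integrable (fun t : ℝ => t) ν)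
    {e : Sym2 (V d)} (he : IsEdge e) :
    Integrable (fun w : Cfg d => w e) P ∧ ∫ w, w e ∂P = ∫ t, t ∂ν := by
  have hmap : P.map (fun w : Cfg d => w e) = ν := hP.2.1 e he
  constructor
  · have := (integrable_map_measure (f := fun w : Cfg d => w e) (g := fun t : ℝ => t)
      (by rw [hmap]; exact hm1.aestronglyMeasurable)
      (measurable_pi_apply e).aemeasurable).mp
    rw [hmap] at this
    exact this hm1
  · have := integral_map (φ := fun w : Cfg d => w e) (f := fun t : ℝ => t)
      (measurable_pi_apply e).aemeasurable
      (by rw [hmap]; exact hm1.aestronglyMeasurable)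
    rw [hmap] at this
    exact this.symm

lemma pathCost_integral (hP : IID d P ν) (hm1 : Integrable (fun t : ℝ => t) ν) :
    ∀ γ : List (V d), γ.Chain' adj →
      Integrable (fun w => pathCost w γ) P ∧
        ∫ w, pathCost w γ ∂P = ((γ.length - 1 : ℕ) : ℝ) * ∫ t, t ∂ν
  | [], _ => by simp [pathCost]
  | [x], _ => by simp [pathCost]
  | x :: y :: l, h => by
      rw [List.Chain', List.isChain_cons_cons] at h
      obtain ⟨hint, hval⟩ := pathCost_integral hP hm1 (y :: l) h.2
      obtain ⟨hint0, hval0⟩ := integrable_eval hP hm1 (isEdge_of_adj h.1)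
      constructor
      · exact hint0.add hint
      · have : (fun w => pathCost w (x :: y :: l))
            = fun w => w s(x, y) + pathCost w (y :: l) := rfl
        rw [this, integral_add hint0 hint, hval0, hval]
        simp only [List.length_cons]
        push_cast [Nat.add_sub_cancel]
        ring

lemma integrable_ptm (hP : IID d P ν) (hm1 : Integrable (fun t : ℝ => t) ν) (x y : V d) :
    Integrable (fun w => ptm w x y) P := by
  obtain ⟨γ, hγc, hγh, hγl, _⟩ := exists_chain x y
  have hγ : γ ∈ Paths x y := ⟨hγc, hγh, hγl⟩
  have hgint : Integrable (fun w => max 0 (pathCost w γ)) P := by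
    have := ((pathCost_integral hP hm1 γ hγc).1).pos_part
    simpa [max_comm] using this
  refine Integrable.mono' hgint (measurable_ptm x y).aestronglyMeasurable
    (Filter.Eventually.of_forall fun w => ?_)
  rw [Real.norm_of_nonneg (ptm_nonneg w x y)]
  exact ptm_le hγ w


lemma ae_nonneg (hP : IID d P ν) (hν0 : ν (Set.Iio 0) = 0) :
    ∀ᵐ w ∂P, ∀ e, IsEdge e → 0 ≤ w e := by
  have hnull : ∀ e : Eg d, P {w : Cfg d | w e.1 < 0} = 0 := by
    intro e
    have h : {w : Cfg d | w e.1 < 0} = (fun w : Cfg d => w e.1) ⁻¹' (Set.Iio 0) := rfl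
    rw [h, ← Measure.map_apply (measurable_pi_apply e.1) measurableSet_Iio, hP.2.1 e.1 e.2]
    exact hν0
  have hU : P (⋃ e : Eg d, {w : Cfg d | w e.1 < 0}) = 0 := measure_iUnion_null hnull
  rw [ae_iff]
  refine measure_mono_null ?_ hU
  intro w hw
  simp only [Set.mem_setOf_eq, not_forall] at hw
  obtain ⟨e, he, hlt⟩ := hw
  exact Set.mem_iUnion.mpr ⟨⟨e, he⟩, by simpa using hlt⟩

lemma singleton_mem_paths (a : V d) : [a] ∈ Paths a a :=
  ⟨List.isChain_singleton a, rfl, rfl⟩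

lemma ptm_self (w : Cfg d) (a : V d) : ptm w a a = 0 :=
  le_antisymm (by simpa [pathCost] using ptm_le (singleton_mem_paths a) w)
    (ptm_nonneg w a a)

lemma integral_ptm_nsmul [IsProbabilityMeasure ν] (hP : IID d P ν)
    (hm1 : Integrable (fun t : ℝ => t) ν) :
    ∀ (k : ℕ) (a u : V d), ∫ w, ptm w a (a + k • u) ∂P ≤ (k : ℝ) * ∫ w, ptm w 0 u ∂P := by
  intro k
  induction k with
  | zero => intro a u; simp [ptm_self]
  | succ k ih =>
      intro a u
      haveI : IsProbabilityMeasure P := hP.1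
      have he : a + (k + 1) • u = (a + u) + k • u := by rw [succ_nsmul]; abel
      have htri : ∀ w : Cfg d, ptm w a (a + (k + 1) • u)
          ≤ ptm w a (a + u) + ptm w (a + u) ((a + u) + k • u) := fun w => by
        rw [he]; exact ptm_triangle w a (a + u) ((a + u) + k • u)
      have h1 : ∫ w, ptm w a (a + (k + 1) • u) ∂P
          ≤ ∫ w, (ptm w a (a + u) + ptm w (a + u) ((a + u) + k • u)) ∂P :=
        integral_mono (integrable_ptm hP hm1 _ _)
          ((integrable_ptm hP hm1 _ _).add (integrable_ptm hP hm1 _ _)) htri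
      rw [integral_add (integrable_ptm hP hm1 _ _) (integrable_ptm hP hm1 _ _)] at h1
      have h2 : ∫ w, ptm w a (a + u) ∂P = ∫ w, ptm w 0 u ∂P := by
        have := integral_ptm_translate hP a 0 u
        simpa [add_comm] using this
      have h3 := ih (a + u) u
      push_cast
      linarith

lemma integral_ptm_finsetsum [IsProbabilityMeasure ν] (hP : IID d P ν)
    (hm1 : Integrable (fun t : ℝ => t) ν) (p : V d → ℕ) (s : Finset (V d)) :
    ∀ a : V d, ∫ w, ptm w a (a + ∑ U ∈ s, p U • U) ∂P
      ≤ ∑ U ∈ s, (p U : ℝ) * ∫ w, ptm w 0 U ∂P := by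
  haveI : IsProbabilityMeasure P := hP.1
  classical
  induction s using Finset.induction_on with
  | empty => intro a; simp [ptm_self]
  | insert U t hU ih =>
      intro a
      rw [Finset.sum_insert hU, Finset.sum_insert hU]
      have he : a + (p U • U + ∑ X ∈ t, p X • X)
          = (a + p U • U) + ∑ X ∈ t, p X • X := by abel
      have htri : ∀ w : Cfg d, ptm w a (a + (p U • U + ∑ X ∈ t, p X • X))
          ≤ ptm w a (a + p U • U)
            + ptm w (a + p U • U) ((a + p U • U) + ∑ X ∈ t, p X • X) := fun w => by
        rw [he]; exact ptm_triangle w _ _ _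
      have h1 := integral_mono (μ := P) (integrable_ptm hP hm1 _ _)
        ((integrable_ptm hP hm1 _ _).add (integrable_ptm hP hm1 _ _)) htri
      simp only [Pi.add_apply] at h1
      rw [integral_add (integrable_ptm hP hm1 _ _) (integrable_ptm hP hm1 _ _)] at h1
      have h2 := integral_ptm_nsmul hP hm1 (p U) a U
      have h3 := ih (a + p U • U)
      linarith

lemma integral_ptm_le_dist (hP : IID d P ν) (hm1 : Integrable (fun t : ℝ => t) ν)
    (hν0 : ν (Set.Iio 0) = 0) (x y : V d) :
    ∫ w, ptm w x y ∂P ≤ ((∑ i, (x i - y i).natAbs : ℕ) : ℝ) * ∫ t, t ∂ν := by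
  obtain ⟨γ, hc, hh, hl, hlen⟩ := exists_chain x y
  have hmem : γ ∈ Paths x y := ⟨hc, hh, hl⟩
  have hint := pathCost_integral hP hm1 γ hc
  have hposint : Integrable (fun w => max 0 (pathCost w γ)) P := by
    have := hint.1.pos_part
    simpa [max_comm] using this
  have h1 : ∫ w, ptm w x y ∂P ≤ ∫ w, max 0 (pathCost w γ) ∂P :=
    integral_mono (integrable_ptm hP hm1 _ _) hposint (fun w => ptm_le hmem w)
  have h2 : ∫ w, max 0 (pathCost w γ) ∂P = ∫ w, pathCost w γ ∂P := by
    refine integral_congr_ae ?_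
    filter_upwards [ae_nonneg hP hν0] with w hw
    exact max_eq_right (pathCost_nonneg hw hc)
  rw [h2, hint.2, hlen] at h1
  simpa using h1

end Integrals



end Statement11Aux

/-- subadditivity step in the proof of Theorem 1.1: if nonnegative
integers `p(1),…,p(K)` satisfy `|Σ_k p(k) U_k − nξ|_∞ ≤ M`, then
`Σ_k p(k) E[T(0,U_k)] ≥ E[a_{0,n}(ξ)] − d (M+1) m_{ν,1}`. -/
theorem statement11 (d : ℕ) (hd : 2 ≤ d)
    (ν : Measure ℝ) (hνprob : IsProbabilityMeasure ν) (hνpos : ν (Set.Iio 0) = 0)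
    (hm1 : Integrable (fun t : ℝ => t) ν)
    (P : Measure (Cfg d)) (hP : IID d P ν)
    (ξ : Fin d → ℝ) (hξ : unitVec ξ) (M n : ℕ)
    (p : V d → ℕ) (hfin : (Function.support p).Finite)
    (hsupp : ∀ U, p U ≠ 0 → linfEqM U M)
    (hclose : ∀ i, |(((∑ᶠ U, p U • U) i : ℤ) : ℝ) - (n : ℝ) * ξ i| ≤ (M : ℝ)) :
    (∫ w, aT w n ξ ∂P) - (d : ℝ) * ((M : ℝ) + 1) * (∫ t, t ∂ν) ≤
      ∑ᶠ U, (p U : ℝ) * ∫ w, pt w 0 U ∂P := by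
  classical
  haveI hPprob : IsProbabilityMeasure P := hP.1
  haveI := hνprob
  set m1 := ∫ t, t ∂ν with hm1def
  have hm1nn : 0 ≤ m1 := by
    have h0 : ∀ᵐ t ∂ν, (0:ℝ) ≤ t := by
      rw [ae_iff]
      refine measure_mono_null ?_ hνpos
      intro t ht
      simp only [Set.mem_setOf_eq, not_le] at ht
      simpa using ht
    exact integral_nonneg_of_ae h0
  set r : V d := rd ((n : ℝ) • ξ) with hrdef
  set S : V d := ∑ᶠ U, p U • U with hSdef
  have hGae := ae_nonneg hP hνpos
  have hsuppSub : (Function.support fun U : V d => p U • U) ⊆ ↑hfin.toFinset := by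
    have hsub : Function.support (fun U : V d => p U • U) ⊆ Function.support p := by
      intro U hU
      simp only [Function.mem_support] at *
      intro h0; apply hU; rw [h0, zero_smul]
    exact hsub.trans (by rw [Set.Finite.coe_toFinset])
  have hSsum : S = ∑ U ∈ hfin.toFinset, p U • U := by
    rw [hSdef]; exact finsum_eq_finset_sum_of_support_subset _ hsuppSub
  have hptEq : ∀ x y : V d, ∫ w, pt w x y ∂P = ∫ w, ptm w x y ∂P := fun x y =>
    integral_congr_ae (by filter_upwards [hGae] with w hw; exact pt_eq_ptm hw x y)
  have hRHS : (∑ᶠ U, (p U : ℝ) * ∫ w, pt w 0 U ∂P)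
      = ∑ U ∈ hfin.toFinset, (p U : ℝ) * ∫ w, ptm w 0 U ∂P := by
    have hfun : (fun U : V d => (p U : ℝ) * ∫ w, pt w 0 U ∂P)
        = fun U => (p U : ℝ) * ∫ w, ptm w 0 U ∂P := by
      funext U; rw [hptEq 0 U]
    rw [hfun]
    refine finsum_eq_finset_sum_of_support_subset _ ?_
    have hsub : Function.support (fun U : V d => (p U : ℝ) * ∫ w, ptm w 0 U ∂P)
        ⊆ Function.support p := by
      intro U hU
      simp only [Function.mem_support] at *
      intro h0; apply hU; rw [h0, Nat.cast_zero, zero_mul]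
    exact hsub.trans (by rw [Set.Finite.coe_toFinset])
  have hstep1 : ∫ w, aT w n ξ ∂P = ∫ w, ptm w 0 r ∂P := by
    refine integral_congr_ae ?_
    filter_upwards [hGae] with w hw
    exact pt_eq_ptm hw 0 r
  have htri : ∫ w, ptm w 0 r ∂P ≤ ∫ w, ptm w 0 S ∂P + ∫ w, ptm w S r ∂P := by
    have h := integral_mono (μ := P) (integrable_ptm hP hm1 0 r)
      ((integrable_ptm hP hm1 0 S).add (integrable_ptm hP hm1 S r))
      (fun w => ptm_triangle w 0 S r)
    simp only [Pi.add_apply] at h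
    rwa [integral_add (integrable_ptm hP hm1 _ _) (integrable_ptm hP hm1 _ _)] at h
  have hchain : ∫ w, ptm w 0 S ∂P
      ≤ ∑ U ∈ hfin.toFinset, (p U : ℝ) * ∫ w, ptm w 0 U ∂P := by
    have h := integral_ptm_finsetsum hP hm1 p hfin.toFinset 0
    simp only [zero_add] at h
    rwa [← hSsum] at h
  have hcoord : ∀ i, (S i - r i).natAbs ≤ M := by
    intro i
    have h1 : |((S i : ℤ) : ℝ) - (n : ℝ) * ξ i| ≤ (M : ℝ) := hclose i
    have hri : ((r i : ℤ) : ℝ) = ((round ((n : ℝ) * ξ i) : ℤ) : ℝ) := by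
      rw [hrdef]; simp [rd, Pi.smul_apply, smul_eq_mul]
    have h2 : |(n : ℝ) * ξ i - ((r i : ℤ) : ℝ)| ≤ 1 / 2 := by
      rw [hri]; exact abs_sub_round ((n : ℝ) * ξ i)
    have h3 : |((S i - r i : ℤ) : ℝ)| < (M : ℝ) + 1 := by
      push_cast
      calc |(S i : ℝ) - (r i : ℝ)|
          ≤ |(S i : ℝ) - (n : ℝ) * ξ i| + |(n : ℝ) * ξ i - (r i : ℝ)| :=
            abs_sub_le _ _ _
        _ < (M : ℝ) + 1 := by
            push_cast at h1 h2
            linarith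
    have h4 : |S i - r i| < (M : ℤ) + 1 := by exact_mod_cast h3
    rw [Int.abs_eq_natAbs] at h4
    omega
  have hsum_nat : (∑ i, (S i - r i).natAbs) ≤ d * M :=
    calc ∑ i, (S i - r i).natAbs ≤ ∑ _i : Fin d, M :=
          Finset.sum_le_sum fun i _ => hcoord i
      _ = d * M := by simp [Finset.sum_const, Finset.card_univ, mul_comm]
  have hseg : ∫ w, ptm w S r ∂P ≤ (d : ℝ) * ((M : ℝ) + 1) * m1 := by
    have h := integral_ptm_le_dist hP hm1 hνpos S r
    have hc : ((∑ i, (S i - r i).natAbs : ℕ) : ℝ) ≤ (d : ℝ) * ((M : ℝ) + 1) := by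
      have h5 : ((∑ i, (S i - r i).natAbs : ℕ) : ℝ) ≤ ((d * M : ℕ) : ℝ) := by
        exact_mod_cast hsum_nat
      push_cast at h5 ⊢
      nlinarith [show (0:ℝ) ≤ (d:ℝ) from Nat.cast_nonneg d]
    calc ∫ w, ptm w S r ∂P ≤ ((∑ i, (S i - r i).natAbs : ℕ) : ℝ) * m1 := h
      _ ≤ (d : ℝ) * ((M : ℝ) + 1) * m1 := mul_le_mul_of_nonneg_right hc hm1nn
  rw [hRHS]
  linarith

end FPP
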